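/- In ℂ[[z]]: 1 + ∑_{n≥1} (A_n(i)/(1+i)^{n-1}) · z^n/n! = sec z + tan z, where sec z + tan z denotes the formal Taylor series of that function. -/

import Mathlib

open PowerSeries Complex Finset

namespace EulerianSecTan

/-- `exp(I z)` as a formal power series. -/
noncomputable def u : PowerSeries ℂ := rescale I (PowerSeries.exp ℂ)

/-- `exp(-I z)` as a formal power series. -/
noncomputable def v : PowerSeries ℂ := rescale (-I) (PowerSeries.exp ℂ)

lemma coeff_u (n : ℕ) : (PowerSeries.coeff n) u = I ^ n / n.factorial := by
  rw [u, coeff_rescale, PowerSeries.coeff_exp]; push_cast; ring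

lemma coeff_v (n : ℕ) : (PowerSeries.coeff n) v = (-I) ^ n / n.factorial := by
  rw [v, coeff_rescale, PowerSeries.coeff_exp]; push_cast; ring

lemma huv : u * v = 1 := by
  rw [u, v, PowerSeries.exp_mul_exp_eq_exp_add, add_neg_cancel, rescale_zero]
  simp

lemma hcos : PowerSeries.C 2 * PowerSeries.cos ℂ = u + v := by
  ext n
  rw [map_add, coeff_u, coeff_v, coeff_C_mul, PowerSeries.cos, coeff_mk]
  rcases Nat.even_or_odd n with he | ⟨r, rfl⟩
  · obtain ⟨r, rfl⟩ := he
    have h1 : I ^ (r + r) = (-1 : ℂ) ^ r := by rw [← two_mul, pow_mul, I_sq]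
    have h2 : (-I) ^ (r + r) = (-1 : ℂ) ^ r := by
      rw [← two_mul, pow_mul]; norm_num [I_sq]
    have h3 : (r + r) / 2 = r := by omega
    rw [if_pos ⟨r, rfl⟩, h1, h2, h3]
    push_cast
    ring
  · have hodd : ¬ Even (2 * r + 1) := by simp [Nat.even_iff]
    rw [if_neg hodd]
    have h2 : (-I) ^ (2 * r + 1) = -(I ^ (2 * r + 1)) := Odd.neg_pow ⟨r, by ring⟩ I
    rw [h2]
    ring

lemma hsin : PowerSeries.C (2 * I) * PowerSeries.sin ℂ = u - v := by
  ext n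
  rw [map_sub, coeff_u, coeff_v, coeff_C_mul, PowerSeries.sin, coeff_mk]
  rcases Nat.even_or_odd n with he | ⟨r, rfl⟩
  · rw [if_pos he]
    obtain ⟨r, rfl⟩ := he
    have h2 : (-I) ^ (r + r) = I ^ (r + r) := by
      rw [← two_mul, pow_mul, pow_mul]; norm_num
    rw [h2]
    ring
  · have hodd : ¬ Even (2 * r + 1) := by simp [Nat.even_iff]
    have h1 : I ^ (2 * r + 1) = I * (-1 : ℂ) ^ r := by
      rw [pow_succ, pow_mul, I_sq]; ring
    have h2 : (-I) ^ (2 * r + 1) = -(I ^ (2 * r + 1)) := Odd.neg_pow ⟨r, by ring⟩ I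
    have h3 : (2 * r + 1) / 2 = r := by omega
    rw [if_neg hodd, h2, h1, h3]
    push_cast
    ring

lemma h1pI : (1 + I : ℂ) ≠ 0 := by
  intro h; have := congrArg Complex.im h; simp at this

lemma term_arith (p q n : ℕ) (a : ℂ) (hq : q ≠ 0) (h : p + q = n) :
    ((1 + I) ^ (n - 1) * (n.factorial : ℂ)) * (I ^ p / p.factorial *
      (a / ((1 + I) ^ (q - 1) * q.factorial)))
    = (n.choose p : ℂ) * (I - 1) ^ p * a := by
  obtain ⟨r, rfl⟩ := Nat.exists_eq_succ_of_ne_zero hq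
  simp only [Nat.succ_eq_add_one] at h ⊢
  have hfac : (n.choose p : ℂ) * p.factorial * (r+1).factorial = n.factorial := by
    have := Nat.choose_mul_factorial_mul_factorial (show p ≤ n by omega)
    rw [show n - p = r + 1 by omega] at this
    exact_mod_cast congrArg (Nat.cast : ℕ → ℂ) this
  have hIm1 : (I - 1 : ℂ) ^ p = I ^ p * (1 + I) ^ p := by
    rw [← mul_pow]; congr 1; rw [mul_add, mul_one, I_mul_I]; ring
  have hpow : ((1 + I) : ℂ) ^ (n - 1) = (1 + I) ^ p * (1 + I) ^ r := by
    rw [← pow_add]; congr 1; omega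
  have hp0 : ((p.factorial : ℂ)) ≠ 0 := by exact_mod_cast Nat.factorial_ne_zero p
  have hq0 : (((r+1).factorial : ℂ)) ≠ 0 := by exact_mod_cast Nat.factorial_ne_zero (r+1)
  have hden : ((p.factorial : ℂ) * ((1 + I) ^ r * (r+1).factorial)) ≠ 0 :=
    mul_ne_zero hp0 (mul_ne_zero (pow_ne_zero _ h1pI) hq0)
  rw [show (r + 1) - 1 = r from rfl, hIm1, hpow, div_mul_div_comm, mul_div_assoc',
    div_eq_iff hden]
  linear_combination (-(I ^ p * (1 + I) ^ p * (1 + I) ^ r * a)) * hfac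

lemma keyK (a : ℕ → ℂ) (ha0 : a 0 = 1)
    (hrec : ∀ n, n ≠ 0 → I * a n =
      ∑ p ∈ antidiagonal n, (n.choose p.1 : ℂ) * (I - 1) ^ p.1 * a p.2) :
    (PowerSeries.C I - u) * (1 + PowerSeries.mk (fun n => if n = 0 then 0 else
        a n / ((1 + I) ^ (n - 1) * n.factorial)))
    = PowerSeries.C I * u - 1 := by
  set S : PowerSeries ℂ := PowerSeries.mk (fun n => if n = 0 then 0 else
      a n / ((1 + I) ^ (n - 1) * n.factorial)) with hS
  set b : ℕ → ℂ := fun j => if j = 0 then 1 else a j / ((1 + I) ^ (j - 1) * j.factorial)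
    with hb
  have hcoeffB : ∀ j, (PowerSeries.coeff j) (1 + S) = b j := by
    intro j
    rw [map_add, hS, coeff_mk, hb]
    cases j with
    | zero => simp
    | succ m => simp [coeff_one]
  ext n
  rw [sub_mul, map_sub, map_sub, coeff_C_mul, coeff_C_mul, hcoeffB, coeff_u,
    PowerSeries.coeff_mul]
  have hcterm : ∀ p : ℕ × ℕ, (PowerSeries.coeff p.1) u * (PowerSeries.coeff p.2) (1 + S)
      = I ^ p.1 / p.1.factorial * b p.2 := by
    intro p; rw [coeff_u, hcoeffB]
  rw [Finset.sum_congr rfl (fun p _ => hcterm p)]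
  cases n with
  | zero =>
    simp [Finset.Nat.antidiagonal_zero, hb, ha0, coeff_one]
  | succ m =>
    set n := m + 1 with hn
    rw [coeff_one, if_neg (Nat.succ_ne_zero m)]
    have hbn : b n = a n / ((1 + I) ^ m * n.factorial) := by simp [hb, hn]
    set c : ℂ := (1 + I) ^ m * (n.factorial : ℂ) with hc
    have hc0 : c ≠ 0 := by
      apply mul_ne_zero (pow_ne_zero _ h1pI)
      exact_mod_cast Nat.factorial_ne_zero n
    apply mul_left_cancel₀ hc0
    have hmem : ((n : ℕ), 0) ∈ antidiagonal n := by simp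
    rw [mul_sub, Finset.mul_sum, ← Finset.add_sum_erase _ _ hmem]
    have hterm : ∀ p ∈ (antidiagonal n).erase (n, 0),
        c * (I ^ p.1 / p.1.factorial * b p.2)
        = (n.choose p.1 : ℂ) * (I - 1) ^ p.1 * a p.2 := by
      intro p hp
      rw [Finset.mem_erase, Finset.HasAntidiagonal.mem_antidiagonal] at hp
      have hq : p.2 ≠ 0 := by
        intro h0
        exact hp.1 (by ext <;> simp [h0, ← hp.2, h0])
      rw [hb]
      simp only [if_neg hq]
      rw [hc, show m = n - 1 from rfl]
      exact term_arith p.1 p.2 n (a p.2) hq hp.2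
    rw [Finset.sum_congr rfl hterm]
    have hrec' := hrec n (Nat.succ_ne_zero m)
    rw [← Finset.add_sum_erase _ _ hmem] at hrec'
    simp only [Nat.choose_self, Nat.cast_one, one_mul, ha0, mul_one] at hrec'
    have hsum : ∑ p ∈ (antidiagonal n).erase (n, 0),
        (n.choose p.1 : ℂ) * (I - 1) ^ p.1 * a p.2 = I * a n - (I - 1) ^ n := by
      rw [hrec']; ring
    rw [hsum, hbn, hc]
    have hIm1 : (I - 1 : ℂ) ^ n = I ^ n * (1 + I) ^ n := by
      rw [← mul_pow]; congr 1; rw [mul_add, mul_one, I_mul_I]; ring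
    have hfac0 : ((n.factorial : ℂ)) ≠ 0 := by exact_mod_cast Nat.factorial_ne_zero n
    have hcanc : (1 + I) ^ m * (n.factorial : ℂ) *
        (I * (a n / ((1 + I) ^ m * (n.factorial : ℂ)))) = I * a n := by
      have h1m : (1 + I : ℂ) ^ m ≠ 0 := pow_ne_zero m h1pI
      field_simp
    rw [hcanc]
    simp only [hb, if_pos rfl, mul_one]
    rw [hIm1, hn]
    have hf' : (((m + 1).factorial : ℕ) : ℂ) ≠ 0 := by exact_mod_cast Nat.factorial_ne_zero _
    field_simp
    ring

end EulerianSecTan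

open EulerianSecTan

/-- In `ℂ[[z]]`: `1 + ∑_{n≥1} (A_n(i)/(1+i)^{n-1}) z^n/n! = sec z + tan z`,
where `sec z + tan z` is the formal power series `(1 + sin z)/cos z`. -/
theorem eulerian_secant_tangent (A : ℕ → Polynomial ℂ)
    (hA : ∀ n, ((A n : PowerSeries ℂ)) =
      (1 - X) ^ (n + 1) * PowerSeries.mk (fun k => ((k : ℂ) + 1) ^ n)) :
    1 + (PowerSeries.mk (fun n => if n = 0 then 0 else
        (A n).eval I / ((1 + I) ^ (n - 1) * n.factorial)) : PowerSeries ℂ)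
    = (1 + PowerSeries.sin ℂ) * (PowerSeries.cos ℂ)⁻¹ := by
  -- `A 0 = 1`
  have ha0 : (A 0).eval I = 1 := by
    have h : (A 0 : PowerSeries ℂ) = 1 := by
      rw [hA 0]
      ext n
      rw [pow_one, sub_mul, one_mul, map_sub]
      cases n with
      | zero => simp
      | succ m => rw [coeff_succ_X_mul, coeff_mk, coeff_mk]; simp [Nat.succ_ne_zero]
    rw [Polynomial.coe_eq_one_iff] at h
    rw [h]; simp
  -- polynomial recurrence `X * A n = ∑ C(n,p) (X-1)^p A q`
  have key_poly : ∀ n : ℕ, n ≠ 0 → Polynomial.X * A n = ∑ p ∈ antidiagonal n,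
      Polynomial.C ((n.choose p.1 : ℂ)) * (Polynomial.X - 1) ^ p.1 * A p.2 := by
    intro n hn
    rw [← Polynomial.coe_inj,
      show ((∑ p ∈ antidiagonal n, Polynomial.C ((n.choose p.1 : ℂ)) *
          (Polynomial.X - 1) ^ p.1 * A p.2 : Polynomial ℂ) : PowerSeries ℂ)
        = ∑ p ∈ antidiagonal n, ((Polynomial.C ((n.choose p.1 : ℂ)) *
          (Polynomial.X - 1) ^ p.1 * A p.2 : Polynomial ℂ) : PowerSeries ℂ) by
        simp only [← Polynomial.coeToPowerSeries.ringHom_apply]; exact map_sum _ _ _,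
      Polynomial.coe_mul, Polynomial.coe_X]
    have hR : ∀ p ∈ antidiagonal n,
        ((Polynomial.C ((n.choose p.1 : ℂ)) *
          (Polynomial.X - 1) ^ p.1 * A p.2 : Polynomial ℂ) : PowerSeries ℂ)
        = (1 - X) ^ (n + 1) * (PowerSeries.C ((n.choose p.1 : ℂ)) * (-1) ^ p.1 *
            PowerSeries.mk (fun k => ((k : ℂ) + 1) ^ p.2)) := by
      intro p hp
      rw [Finset.HasAntidiagonal.mem_antidiagonal] at hp
      rw [Polynomial.coe_mul, Polynomial.coe_mul, Polynomial.coe_pow, Polynomial.coe_C,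
        Polynomial.coe_sub, Polynomial.coe_X, Polynomial.coe_one, hA p.2]
      have hXm1 : (X - 1 : PowerSeries ℂ) ^ p.1 = (-1) ^ p.1 * (1 - X) ^ p.1 := by
        rw [← neg_sub (1 : PowerSeries ℂ) X, neg_pow]
      rw [hXm1]
      have h2 : (1 - X : PowerSeries ℂ) ^ p.1 * (1 - X) ^ (p.2 + 1) = (1 - X) ^ (n + 1) := by
        rw [← pow_add]; congr 1; omega
      calc PowerSeries.C ((n.choose p.1 : ℂ)) * ((-1) ^ p.1 * (1 - X) ^ p.1) *
            ((1 - X) ^ (p.2 + 1) * PowerSeries.mk (fun k => ((k : ℂ) + 1) ^ p.2))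
          = ((1 - X) ^ p.1 * (1 - X) ^ (p.2 + 1)) * (PowerSeries.C ((n.choose p.1 : ℂ)) *
              (-1) ^ p.1 * PowerSeries.mk (fun k => ((k : ℂ) + 1) ^ p.2)) := by ring
        _ = _ := by rw [h2]
    rw [Finset.sum_congr rfl hR, ← Finset.mul_sum, hA n]
    have hsum : ∑ p ∈ antidiagonal n, (PowerSeries.C ((n.choose p.1 : ℂ)) * (-1) ^ p.1 *
        PowerSeries.mk (fun k => ((k : ℂ) + 1) ^ p.2))
        = PowerSeries.mk (fun k => (k : ℂ) ^ n) := by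
      ext m
      rw [map_sum, coeff_mk]
      have hterm : ∀ p ∈ antidiagonal n,
          (PowerSeries.coeff m) (PowerSeries.C ((n.choose p.1 : ℂ)) *
          (-1) ^ p.1 * PowerSeries.mk (fun k => ((k : ℂ) + 1) ^ p.2))
          = (-1 : ℂ) ^ p.1 * ((m : ℂ) + 1) ^ (n - p.1) * (n.choose p.1) := by
        intro p hp
        rw [Finset.HasAntidiagonal.mem_antidiagonal] at hp
        rw [mul_assoc, coeff_C_mul,
          show ((-1 : PowerSeries ℂ) ^ p.1 * PowerSeries.mk (fun k => ((k : ℂ) + 1) ^ p.2))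
            = PowerSeries.C ((-1 : ℂ) ^ p.1) * PowerSeries.mk (fun k => ((k : ℂ) + 1) ^ p.2) by
            rw [map_pow, map_neg, map_one],
          coeff_C_mul, coeff_mk,
          show p.2 = n - p.1 by omega]
        ring
      rw [Finset.sum_congr rfl hterm, Finset.Nat.sum_antidiagonal_eq_sum_range_succ_mk]
      have h3 := add_pow (-1 : ℂ) ((m : ℂ) + 1) n
      rw [show (-1 : ℂ) + ((m : ℂ) + 1) = m by ring] at h3
      rw [← h3]
    rw [hsum]
    rw [show X * ((1 - X : PowerSeries ℂ) ^ (n + 1) * PowerSeries.mk (fun k => ((k : ℂ) + 1) ^ n))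
        = (1 - X) ^ (n + 1) * (X * PowerSeries.mk (fun k => ((k : ℂ) + 1) ^ n)) by ring]
    congr 1
    ext m
    cases m with
    | zero => rw [coeff_zero_X_mul, coeff_mk]; push_cast; rw [zero_pow hn]
    | succ k => rw [coeff_succ_X_mul, coeff_mk, coeff_mk]; push_cast; ring
  -- evaluated recurrence
  have hrec : ∀ n : ℕ, n ≠ 0 → I * (A n).eval I = ∑ p ∈ antidiagonal n,
      (n.choose p.1 : ℂ) * (I - 1) ^ p.1 * (A p.2).eval I := by
    intro n hn
    have h := congrArg (Polynomial.eval I) (key_poly n hn)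
    simpa [Polynomial.eval_finset_sum] using h
  -- the key power series identity
  have hK := keyK (fun n => (A n).eval I) ha0 hrec
  set J : PowerSeries ℂ := PowerSeries.C I with hJ
  set B : PowerSeries ℂ := 1 + PowerSeries.mk (fun n => if n = 0 then 0 else
      (A n).eval I / ((1 + I) ^ (n - 1) * n.factorial)) with hB
  have hK' : (J - u) * B = J * u - 1 := hK
  -- the trigonometric identity
  have hJ2 : J ^ 2 = -1 := by
    rw [hJ, ← map_pow, I_sq, map_neg, map_one]
  have hC2 : (PowerSeries.C 2 : PowerSeries ℂ) = 2 := by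
    rw [map_ofNat]
  have h1 : 2 * PowerSeries.cos ℂ = u + v := by rw [← hC2]; exact hcos
  have h2 : 2 * J * PowerSeries.sin ℂ = u - v := by
    rw [hJ, ← hC2, ← map_mul]; exact hsin
  have h2J : (2 * J : PowerSeries ℂ) ≠ 0 := by
    intro h
    have := congrArg (constantCoeff) h
    rw [map_mul, map_ofNat, hJ, constantCoeff_C, map_zero] at this
    simp [I_ne_zero] at this
  have hT : (J * u - 1) * PowerSeries.cos ℂ = (J - u) * (1 + PowerSeries.sin ℂ) := by
    apply mul_left_cancel₀ h2J
    linear_combination (J * (J * u - 1)) * h1 - (J - u) * h2 +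
      (u ^ 2 + u * v - 2) * hJ2 - 2 * huv
  have hne : J - u ≠ 0 := by
    intro h
    have h0 := congrArg (constantCoeff) h
    rw [map_sub, map_zero] at h0
    have hu0 : constantCoeff u = 1 := by
      rw [← coeff_zero_eq_constantCoeff_apply, coeff_u]; simp
    rw [hu0, hJ, constantCoeff_C, sub_eq_zero] at h0
    have := congrArg Complex.re h0
    simp at this
  have hBcos : B * PowerSeries.cos ℂ = 1 + PowerSeries.sin ℂ := by
    apply mul_left_cancel₀ hne
    rw [← mul_assoc, hK', hT]
  have hcc : constantCoeff (PowerSeries.cos ℂ) ≠ 0 := by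
    rw [← coeff_zero_eq_constantCoeff_apply, PowerSeries.cos, coeff_mk]
    norm_num
  rw [hB] at hBcos
  rw [← hBcos, mul_assoc, PowerSeries.mul_inv_cancel _ hcc, mul_one]
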